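/- Let W be a DMC with finite alphabets 𝒳, 𝒴, let P be a PMF on 𝒳, and let R satisfy 0 < R < I(P,W). Then there exist τ > 0 and n₀ ∈ ℕ such that for every blocklength n ≥ n₀ there exists an (n, ℳ, e^{−nτ}, e^{−nτ}) ID code for W with (1/n)·log log |ℳ| ≥ R. (Consequence of the paper's random pool-and-bins construction, Claim 1: the maximum probabilities of missed and wrong identification can be made to decay exponentially in n at every rate below I(P,W).) -/

import Mathlib

open scoped Classical
open Finset

noncomputable section

/-- `P` is a probability mass function on the finite type `X`. -/
def IsPMF {X : Type*} [Fintype X] (P : X → ℝ) : Prop :=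
  (∀ x, 0 ≤ P x) ∧ ∑ x, P x = 1

/-- `W` is a (discrete memoryless) channel from `X` to `Y`. -/
def IsChannel {X Y : Type*} [Fintype Y] (W : X → Y → ℝ) : Prop :=
  (∀ x y, 0 ≤ W x y) ∧ ∀ x, ∑ y, W x y = 1

/-- The `n`-fold memoryless extension `W^n(𝐲|𝐱) = ∏ᵢ W(yᵢ|xᵢ)`. -/
def Wn {X Y : Type*} (W : X → Y → ℝ) (n : ℕ) (x : Fin n → X) (y : Fin n → Y) : ℝ :=
  ∏ i, W (x i) (y i)

/-- Mutual information `I(P,W)` (natural logarithm), with the convention that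
terms with `P x * W x y = 0` contribute `0`. -/
def mutInf {X Y : Type*} [Fintype X] [Fintype Y] (P : X → ℝ) (W : X → Y → ℝ) : ℝ :=
  ∑ x, ∑ y, if P x * W x y = 0 then 0
    else P x * W x y * Real.log (W x y / ∑ x', P x' * W x' y)

/-- The error requirements of an `(n, M, l1, l2)` ID code for the DMC `W`:
maximum probability of missed identification at most `l1`, maximum probability
of wrong identification at most `l2`. -/
def IDCodeErr {X Y M : Type*} [Fintype X] [Fintype Y]
    (n : ℕ) (W : X → Y → ℝ) (Q : M → (Fin n → X) → ℝ)
    (D : M → Finset (Fin n → Y)) (l1 l2 : ℝ) : Prop :=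
  (∀ m, ∑ x, Q m x * ∑ y ∈ (D m)ᶜ, Wn W n x y ≤ l1) ∧
  (∀ m m', m ≠ m' → ∑ x, Q m x * ∑ y ∈ D m', Wn W n x y ≤ l2)

/-- `(n, M, l1, l2)` ID code for the DMC `W`. -/
def IsIDCode {X Y M : Type*} [Fintype X] [Fintype Y]
    (n : ℕ) (W : X → Y → ℝ) (Q : M → (Fin n → X) → ℝ)
    (D : M → Finset (Fin n → Y)) (l1 l2 : ℝ) : Prop :=
  (∀ m, IsPMF (Q m)) ∧ IDCodeErr n W Q D l1 l2

lemma sum_fn_prod {ι A : Type} [DecidableEq ι] [Fintype ι] [Fintype A] (g : ι → A → ℝ) :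
    ∑ f : ι → A, ∏ i, g i (f i) = ∏ i, ∑ a, g i a := by
  rw [Finset.prod_univ_sum, Fintype.piFinset_univ]

lemma sum_fn_prod_const {ι A : Type} [DecidableEq ι] [Fintype ι] [Fintype A] (g : A → ℝ) :
    ∑ f : ι → A, ∏ i, g (f i) = (∑ a, g a) ^ (Fintype.card ι) := by
  rw [sum_fn_prod (fun _ => g), Finset.prod_const, Finset.card_univ]

lemma sum_fn_prod_pair {n : ℕ} {A B : Type} [Fintype A] [Fintype B] (h : A → B → ℝ) :
    ∑ x : Fin n → A, ∑ y : Fin n → B, ∏ i, h (x i) (y i)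
      = (∑ a, ∑ b, h a b) ^ n := by
  have e1 : ∑ x : Fin n → A, ∑ y : Fin n → B, ∏ i, h (x i) (y i)
      = ∑ p : (Fin n → A) × (Fin n → B), ∏ i, h (p.1 i) (p.2 i) := by
    rw [Fintype.sum_prod_type]
  have e2 : ∑ z : Fin n → A × B, ∏ i, h (z i).1 (z i).2
      = ∑ p : (Fin n → A) × (Fin n → B), ∏ i, h (p.1 i) (p.2 i) := by
    exact Fintype.sum_equiv (Equiv.arrowProdEquivProdArrow (Fin n) (fun _ => A) (fun _ => B))
      (fun z : Fin n → A × B => ∏ i, h (z i).1 (z i).2)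
      (fun p : (Fin n → A) × (Fin n → B) => ∏ i, h (p.1 i) (p.2 i)) (fun z => rfl)
  have e3 : ∑ z : Fin n → A × B, ∏ i, h (z i).1 (z i).2
      = (∑ q : A × B, h q.1 q.2) ^ n := by
    have := sum_fn_prod_const (ι := Fin n) (fun q : A × B => h q.1 q.2)
    rw [Fintype.card_fin] at this
    convert this using 2
    all_goals exact congrArg (fun i => @Finset.univ (Fin n → A × B) i) (Subsingleton.elim _ _)
  rw [e1, ← e2, e3, Fintype.sum_prod_type]


/-- If f has negative derivative at 0, some point in (0,1) has f t < f 0. -/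
lemma exists_lt_of_hasDerivAt_neg {f : ℝ → ℝ} {d : ℝ} (hf : HasDerivAt f d 0)
    (hd : d < 0) : ∃ t : ℝ, 0 < t ∧ t < 1 ∧ f t < f 0 := by
  have hs := hasDerivAt_iff_tendsto_slope.1 hf
  have hs' : Filter.Tendsto (slope f 0) (nhdsWithin 0 (Set.Ioi 0)) (nhds d) :=
    hs.mono_left (nhdsWithin_mono 0 (fun x hx => ne_of_gt hx))
  have hneg : ∀ᶠ t in nhdsWithin 0 (Set.Ioi 0), slope f 0 t < 0 :=
    hs' (Iio_mem_nhds hd)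
  have hlt : ∀ᶠ t in nhdsWithin (0:ℝ) (Set.Ioi 0), t < 1 := by
    filter_upwards [Ioo_mem_nhdsGT (by norm_num : (0:ℝ) < 1)] with t ht
    exact ht.2
  have hpos : ∀ᶠ t in nhdsWithin (0:ℝ) (Set.Ioi 0), 0 < t :=
    eventually_mem_nhdsWithin.mono (fun t ht => ht)
  obtain ⟨t, h1, h2, h3⟩ := (hneg.and (hlt.and hpos)).exists
  refine ⟨t, h3, h2, ?_⟩
  have : (f t - f 0) / t < 0 := by
    have := h1
    rw [slope_def_field] at this
    simpa [div_eq_inv_mul] using this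
  have := (div_neg_iff.1 this)
  rcases this with ⟨hnum, hden⟩ | ⟨hnum, hden⟩
  · linarith
  · linarith [h3, hden]

section basics
variable {X Y : Type} [Fintype X] [Fintype Y]

def PWm (P : X → ℝ) (W : X → Y → ℝ) (y : Y) : ℝ := ∑ x, P x * W x y

def PnD (P : X → ℝ) (n : ℕ) (x : Fin n → X) : ℝ := ∏ i, P (x i)

def PnY (P : X → ℝ) (W : X → Y → ℝ) (n : ℕ) (y : Fin n → Y) : ℝ := ∏ i, PWm P W (y i)

def Tset (P : X → ℝ) (W : X → Y → ℝ) (c : ℝ) (n : ℕ) (x : Fin n → X) :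
    Finset (Fin n → Y) := univ.filter (fun y => c * PnY P W n y < Wn W n x y)

variable {P : X → ℝ} {W : X → Y → ℝ}

lemma Wn_nonneg (hW : IsChannel W) (n : ℕ) (x : Fin n → X) (y : Fin n → Y) :
    0 ≤ Wn W n x y :=
  Finset.prod_nonneg fun i _ => hW.1 _ _

lemma Wn_sum (hW : IsChannel W) (n : ℕ) (x : Fin n → X) : ∑ y, Wn W n x y = 1 := by
  unfold Wn
  rw [sum_fn_prod (fun i b => W (x i) b)]
  simp [hW.2]

lemma PnD_nonneg (hP : IsPMF P) (n : ℕ) (x : Fin n → X) : 0 ≤ PnD P n x :=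
  Finset.prod_nonneg fun i _ => hP.1 _

lemma PnD_sum (hP : IsPMF P) (n : ℕ) : ∑ x : Fin n → X, PnD P n x = 1 := by
  unfold PnD
  rw [sum_fn_prod (fun (_ : Fin n) a => P a)]
  simp [hP.2]

lemma PWm_nonneg (hW : IsChannel W) (hP : IsPMF P) (y : Y) : 0 ≤ PWm P W y :=
  Finset.sum_nonneg fun x _ => mul_nonneg (hP.1 x) (hW.1 x y)

lemma PnY_nonneg (hW : IsChannel W) (hP : IsPMF P) (n : ℕ) (y : Fin n → Y) :
    0 ≤ PnY P W n y :=
  Finset.prod_nonneg fun i _ => PWm_nonneg hW hP _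

lemma PnY_marginal (n : ℕ) (y : Fin n → Y) :
    ∑ x : Fin n → X, PnD P n x * Wn W n x y = PnY P W n y := by
  have h1 : ∀ x : Fin n → X, PnD P n x * Wn W n x y
      = ∏ i, (P (x i) * W (x i) (y i)) := by
    intro x; rw [Finset.prod_mul_distrib]; rfl
  rw [Finset.sum_congr rfl (fun x _ => h1 x), sum_fn_prod (fun i a => P a * W a (y i))]
  rfl

lemma Wn_sum_subset_le_one (hW : IsChannel W) (n : ℕ) (x : Fin n → X)
    (s : Finset (Fin n → Y)) : ∑ y ∈ s, Wn W n x y ≤ 1 := by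
  rw [← Wn_sum hW n x]
  exact Finset.sum_le_sum_of_subset_of_nonneg (Finset.subset_univ s)
    (fun y _ _ => Wn_nonneg hW n x y)

lemma Tset_marginal_le (hW : IsChannel W) {c : ℝ} (hc : 0 < c) (n : ℕ) (x : Fin n → X) :
    ∑ y ∈ Tset P W c n x, PnY P W n y ≤ c⁻¹ := by
  have h1 : ∑ y ∈ Tset P W c n x, PnY P W n y
      ≤ ∑ y ∈ Tset P W c n x, c⁻¹ * Wn W n x y := by
    refine Finset.sum_le_sum fun y hy => ?_
    rw [Tset, Finset.mem_filter] at hy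
    rw [le_inv_mul_iff₀ hc]
    exact le_of_lt hy.2
  calc ∑ y ∈ Tset P W c n x, PnY P W n y ≤ ∑ y ∈ Tset P W c n x, c⁻¹ * Wn W n x y := h1
    _ = c⁻¹ * ∑ y ∈ Tset P W c n x, Wn W n x y := by rw [Finset.mul_sum]
    _ ≤ c⁻¹ * 1 :=
        mul_le_mul_of_nonneg_left (Wn_sum_subset_le_one hW n x _) (le_of_lt (inv_pos.2 hc))
    _ = c⁻¹ := mul_one _

end basics

section lemB
variable {X Y : Type} [Fintype X] [Fintype Y] {P : X → ℝ} {W : X → Y → ℝ}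



/-- the Chernoff generating function -/
def fexp (P : X → ℝ) (W : X → Y → ℝ) (γ : ℝ) (t : ℝ) : ℝ :=
  ∑ p : X × Y, if P p.1 * W p.1 p.2 = 0 then 0
    else (P p.1 * W p.1 p.2) * Real.exp ((γ + Real.log (PWm P W p.2 / W p.1 p.2)) * t)

lemma fexp_nonneg (hW : IsChannel W) (hP : IsPMF P) (γ t : ℝ) : 0 ≤ fexp P W γ t := by
  refine Finset.sum_nonneg fun p _ => ?_
  by_cases h : P p.1 * W p.1 p.2 = 0
  · simp [h]
  · simp only [h, if_false]
    exact mul_nonneg (mul_nonneg (hP.1 _) (hW.1 _ _)) (Real.exp_pos _).le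

lemma fexp_zero (hW : IsChannel W) (hP : IsPMF P) (γ : ℝ) : fexp P W γ 0 = 1 := by
  unfold fexp
  have : ∀ p : X × Y, (if P p.1 * W p.1 p.2 = 0 then 0
      else (P p.1 * W p.1 p.2) * Real.exp ((γ + Real.log (PWm P W p.2 / W p.1 p.2)) * 0))
      = P p.1 * W p.1 p.2 := by
    intro p
    by_cases h : P p.1 * W p.1 p.2 = 0
    · simp [h]
    · simp [h]
  rw [Finset.sum_congr rfl (fun p _ => this p), Fintype.sum_prod_type]
  have : ∀ x : X, ∑ y, P x * W x y = P x := by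
    intro x; rw [← Finset.mul_sum, hW.2 x, mul_one]
  rw [Finset.sum_congr rfl (fun x _ => this x), hP.2]

lemma fexp_hasDeriv (hW : IsChannel W) (hP : IsPMF P) (γ : ℝ) :
    HasDerivAt (fexp P W γ) (γ - mutInf P W) 0 := by
  have key : ∀ p : X × Y, HasDerivAt
      (fun t => if P p.1 * W p.1 p.2 = 0 then (0:ℝ)
        else (P p.1 * W p.1 p.2) * Real.exp ((γ + Real.log (PWm P W p.2 / W p.1 p.2)) * t))
      (if P p.1 * W p.1 p.2 = 0 then 0
        else (P p.1 * W p.1 p.2) * (γ + Real.log (PWm P W p.2 / W p.1 p.2))) 0 := by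
    intro p
    by_cases h : P p.1 * W p.1 p.2 = 0
    · simp only [h, if_true]
      exact hasDerivAt_const 0 0
    · simp only [h, if_false]
      set a := γ + Real.log (PWm P W p.2 / W p.1 p.2)
      have h1 : HasDerivAt (fun t : ℝ => a * t) (a * 1) 0 := (hasDerivAt_id 0).const_mul a
      have h2 := h1.exp
      have h3 := h2.const_mul (P p.1 * W p.1 p.2)
      convert h3 using 1
      · rfl
      · rfl
      simp
  have hsum : HasDerivAt (fexp P W γ)
      (∑ p : X × Y, if P p.1 * W p.1 p.2 = 0 then 0
        else (P p.1 * W p.1 p.2) * (γ + Real.log (PWm P W p.2 / W p.1 p.2))) 0 := by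
    unfold fexp
    exact HasDerivAt.fun_sum (fun p _ => key p)
  convert hsum using 1
  -- show γ - mutInf = the sum
  have e1 : (∑ p : X × Y, if P p.1 * W p.1 p.2 = 0 then 0
        else (P p.1 * W p.1 p.2) * (γ + Real.log (PWm P W p.2 / W p.1 p.2)))
      = (∑ p : X × Y, if P p.1 * W p.1 p.2 = 0 then 0 else (P p.1 * W p.1 p.2) * γ)
        + ∑ p : X × Y, (if P p.1 * W p.1 p.2 = 0 then 0
          else (P p.1 * W p.1 p.2) * Real.log (PWm P W p.2 / W p.1 p.2)) := by
    rw [← Finset.sum_add_distrib]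
    refine Finset.sum_congr rfl fun p _ => ?_
    by_cases h : P p.1 * W p.1 p.2 = 0
    · simp [h]
    · simp only [h, if_false]; ring
  have e2 : (∑ p : X × Y, if P p.1 * W p.1 p.2 = 0 then 0 else (P p.1 * W p.1 p.2) * γ) = γ := by
    have : ∀ p : X × Y, (if P p.1 * W p.1 p.2 = 0 then (0:ℝ) else (P p.1 * W p.1 p.2) * γ)
        = P p.1 * W p.1 p.2 * γ := by
      intro p; by_cases h : P p.1 * W p.1 p.2 = 0 <;> simp [h]
    rw [Finset.sum_congr rfl (fun p _ => this p), ← Finset.sum_mul, Fintype.sum_prod_type]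
    have : ∀ x : X, ∑ y, P x * W x y = P x := by
      intro x; rw [← Finset.mul_sum, hW.2 x, mul_one]
    rw [Finset.sum_congr rfl (fun x _ => this x), hP.2, one_mul]
  have e3 : (∑ p : X × Y, if P p.1 * W p.1 p.2 = 0 then 0
        else (P p.1 * W p.1 p.2) * Real.log (PWm P W p.2 / W p.1 p.2)) = - mutInf P W := by
    have hm : mutInf P W = ∑ p : X × Y, (if P p.1 * W p.1 p.2 = 0 then 0
        else P p.1 * W p.1 p.2 * Real.log (W p.1 p.2 / PWm P W p.2)) := by
      rw [mutInf, Fintype.sum_prod_type]; rfl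
    rw [hm, ← Finset.sum_neg_distrib]
    refine Finset.sum_congr rfl fun p _ => ?_
    by_cases h : P p.1 * W p.1 p.2 = 0
    · simp [h]
    · simp only [h, if_false]
      have hPp : 0 < P p.1 :=
        lt_of_le_of_ne (hP.1 _) (Ne.symm (left_ne_zero_of_mul h))
      have hWp : 0 < W p.1 p.2 :=
        lt_of_le_of_ne (hW.1 _ _) (Ne.symm (right_ne_zero_of_mul h))
      have hPW : 0 < PWm P W p.2 := by
        have hle : P p.1 * W p.1 p.2 ≤ PWm P W p.2 :=
          Finset.single_le_sum (f := fun x => P x * W x p.2)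
            (fun x _ => mul_nonneg (hP.1 x) (hW.1 x p.2)) (Finset.mem_univ p.1)
        exact lt_of_lt_of_le (lt_of_le_of_ne (mul_nonneg (hP.1 _) (hW.1 _ _)) (Ne.symm h)) hle
      rw [Real.log_div (ne_of_gt hPW) (ne_of_gt hWp), Real.log_div (ne_of_gt hWp) (ne_of_gt hPW)]
      ring
  rw [e1, e2, e3]; ring

end lemB

section lemB2
variable {X Y : Type} [Fintype X] [Fintype Y] {P : X → ℝ} {W : X → Y → ℝ}

lemma gl_eq_fexp (hW : IsChannel W) (hP : IsPMF P) (γ : ℝ) {t : ℝ} (ht0 : 0 < t) (ht1 : t < 1) :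
    ∑ a, ∑ b, P a * (W a b ^ (1 - t)) * ((Real.exp γ * PWm P W b) ^ t)
      = fexp P W γ t := by
  rw [fexp, Fintype.sum_prod_type]
  refine Finset.sum_congr rfl fun a _ => Finset.sum_congr rfl fun b _ => ?_
  by_cases h : P a * W a b = 0
  · rw [if_pos h]
    rcases mul_eq_zero.1 h with hp | hw
    · rw [hp]; ring
    · rw [hw, Real.zero_rpow (by linarith : (1:ℝ) - t ≠ 0), mul_zero, zero_mul]
  · rw [if_neg h]
    have hPp : 0 < P a := lt_of_le_of_ne (hP.1 _) (Ne.symm (left_ne_zero_of_mul h))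
    have hWp : 0 < W a b := lt_of_le_of_ne (hW.1 _ _) (Ne.symm (right_ne_zero_of_mul h))
    have hPW : 0 < PWm P W b := by
      have hle : P a * W a b ≤ PWm P W b :=
        Finset.single_le_sum (f := fun x => P x * W x b)
          (fun x _ => mul_nonneg (hP.1 x) (hW.1 x b)) (Finset.mem_univ a)
      exact lt_of_lt_of_le (lt_of_le_of_ne (mul_nonneg (hP.1 _) (hW.1 _ _)) (Ne.symm h)) hle
    have r1 : Real.exp ((γ + Real.log (PWm P W b / W a b)) * t)
        = Real.exp (γ * t) * (PWm P W b / W a b) ^ t := by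
      rw [add_mul, Real.exp_add, Real.rpow_def_of_pos (div_pos hPW hWp)]
    have r2 : W a b ^ (1 - t) = W a b / W a b ^ t := by
      rw [Real.rpow_sub hWp, Real.rpow_one]
    have r3 : (Real.exp γ * PWm P W b) ^ t
        = Real.exp (γ * t) * PWm P W b ^ t := by
      rw [Real.mul_rpow (Real.exp_pos γ).le hPW.le, Real.rpow_def_of_pos (Real.exp_pos γ),
        Real.log_exp]
    have r4 : (PWm P W b / W a b) ^ t = PWm P W b ^ t / W a b ^ t :=
      Real.div_rpow hPW.le hWp.le t
    have hWt : (0:ℝ) < W a b ^ t := Real.rpow_pos_of_pos hWp t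
    rw [r1, r2, r3, r4]
    field_simp

lemma missed_mean_exp (hW : IsChannel W) (hP : IsPMF P) {γ : ℝ} (hγ : γ < mutInf P W) :
    ∃ δ : ℝ, 0 < δ ∧ ∀ n : ℕ,
      ∑ x : Fin n → X, PnD P n x *
        ∑ y ∈ (Tset P W (Real.exp (n * γ)) n x)ᶜ, Wn W n x y
      ≤ Real.exp (-(n * δ)) := by
  obtain ⟨t, ht0, ht1, hft⟩ := exists_lt_of_hasDerivAt_neg (fexp_hasDeriv hW hP γ)
    (by linarith : γ - mutInf P W < 0)
  rw [fexp_zero hW hP] at hft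
  set s := max (fexp P W γ t) (Real.exp (-1)) with hs
  have hs0 : 0 < s := lt_of_lt_of_le (Real.exp_pos _) (le_max_right _ _)
  have hs1 : s < 1 := max_lt hft (Real.exp_lt_one_iff.2 (by norm_num))
  refine ⟨-Real.log s, by simpa using Real.log_neg hs0 hs1, fun n => ?_⟩
  set c := Real.exp ((n : ℝ) * γ) with hc
  set gl := fun (a : X) (b : Y) =>
    P a * (W a b ^ (1 - t)) * ((Real.exp γ * PWm P W b) ^ t) with hgl
  have hglnn : ∀ a b, 0 ≤ gl a b := fun a b =>
    mul_nonneg (mul_nonneg (hP.1 a) (Real.rpow_nonneg (hW.1 a b) _))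
      (Real.rpow_nonneg (mul_nonneg (Real.exp_pos γ).le (PWm_nonneg hW hP b)) _)
  -- pointwise bound on the complement of the typical set
  have key : ∀ (x : Fin n → X) (y : Fin n → Y), Wn W n x y ≤ c * PnY P W n y →
      PnD P n x * Wn W n x y ≤ ∏ i, gl (x i) (y i) := by
    intro x y hxy
    have hprodeq : ∏ i, gl (x i) (y i)
        = PnD P n x * (∏ i, W (x i) (y i) ^ (1 - t))
          * ∏ i, (Real.exp γ * PWm P W (y i)) ^ t := by
      rw [hgl, Finset.prod_mul_distrib, Finset.prod_mul_distrib]; rfl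
    rcases eq_or_lt_of_le (Wn_nonneg hW n x y) with h0 | h0
    · rw [← h0, mul_zero]
      rw [hprodeq]
      exact mul_nonneg (mul_nonneg (PnD_nonneg hP n x)
        (Finset.prod_nonneg fun i _ => Real.rpow_nonneg (hW.1 _ _) _))
        (Finset.prod_nonneg fun i _ => Real.rpow_nonneg
          (mul_nonneg (Real.exp_pos γ).le (PWm_nonneg hW hP _)) _)
    · -- Wn > 0
      have e1 : Wn W n x y = Wn W n x y ^ (1 - t) * Wn W n x y ^ t := by
        rw [← Real.rpow_add h0, sub_add_cancel, Real.rpow_one]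
      have e2 : Wn W n x y ^ t ≤ (c * PnY P W n y) ^ t :=
        Real.rpow_le_rpow (Wn_nonneg hW n x y) hxy ht0.le
      have e3 : Wn W n x y ^ (1 - t) = ∏ i, W (x i) (y i) ^ (1 - t) :=
        (Real.finset_prod_rpow _ _ (fun i _ => hW.1 _ _) _).symm
      have e4 : c * PnY P W n y = ∏ i, (Real.exp γ * PWm P W (y i)) := by
        rw [Finset.prod_mul_distrib, Finset.prod_const, Finset.card_univ, Fintype.card_fin,
          ← Real.exp_nat_mul]
        rfl
      have e5 : (c * PnY P W n y) ^ t = ∏ i, (Real.exp γ * PWm P W (y i)) ^ t := by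
        rw [e4]
        exact (Real.finset_prod_rpow _ _
          (fun i _ => mul_nonneg (Real.exp_pos γ).le (PWm_nonneg hW hP _)) _).symm
      calc PnD P n x * Wn W n x y
          = PnD P n x * (Wn W n x y ^ (1 - t) * Wn W n x y ^ t) := by rw [← e1]
        _ ≤ PnD P n x * (Wn W n x y ^ (1 - t) * (c * PnY P W n y) ^ t) := by
            refine mul_le_mul_of_nonneg_left ?_ (PnD_nonneg hP n x)
            exact mul_le_mul_of_nonneg_left e2 (Real.rpow_nonneg (Wn_nonneg hW n x y) _)
        _ = ∏ i, gl (x i) (y i) := by rw [hprodeq, e3, e5]; ring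
  -- main chain
  have step1 : ∑ x : Fin n → X, PnD P n x *
        ∑ y ∈ (Tset P W c n x)ᶜ, Wn W n x y
      ≤ ∑ x : Fin n → X, ∑ y : Fin n → Y, ∏ i, gl (x i) (y i) := by
    refine Finset.sum_le_sum fun x _ => ?_
    rw [Finset.mul_sum]
    calc ∑ y ∈ (Tset P W c n x)ᶜ, PnD P n x * Wn W n x y
        ≤ ∑ y ∈ (Tset P W c n x)ᶜ, ∏ i, gl (x i) (y i) := by
          refine Finset.sum_le_sum fun y hy => ?_
          refine key x y ?_
          rw [Finset.mem_compl, Tset, Finset.mem_filter] at hy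
          push_neg at hy
          exact hy (Finset.mem_univ y)
      _ ≤ ∑ y : Fin n → Y, ∏ i, gl (x i) (y i) :=
          Finset.sum_le_sum_of_subset_of_nonneg (Finset.subset_univ _)
            (fun y _ _ => Finset.prod_nonneg fun i _ => hglnn _ _)
  have step2 : ∑ x : Fin n → X, ∑ y : Fin n → Y, ∏ i, gl (x i) (y i)
      = (fexp P W γ t) ^ n := by
    rw [sum_fn_prod_pair gl, gl_eq_fexp hW hP γ ht0 ht1]
  have step3 : (fexp P W γ t) ^ n ≤ s ^ n :=
    pow_le_pow_left₀ (fexp_nonneg hW hP γ t) (le_max_left _ _) n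
  have step4 : s ^ n = Real.exp (-(n * -Real.log s)) := by
    rw [show -((n:ℝ) * -Real.log s) = (n:ℝ) * Real.log s by ring, Real.exp_nat_mul,
      Real.exp_log hs0]
  calc _ ≤ _ := step1
    _ = _ := step2
    _ ≤ s ^ n := step3
    _ = _ := step4

end lemB2

section pooling
variable {V : Type} [Fintype V]

lemma exp_le_one_add {z : ℝ} (h0 : 0 ≤ z) (h1 : z ≤ 1) :
    Real.exp z ≤ 1 + (Real.exp 1 - 1) * z := by
  have := convexOn_exp.2 (Set.mem_univ (0:ℝ)) (Set.mem_univ (1:ℝ))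
    (by linarith : (0:ℝ) ≤ 1 - z) h0 (by ring)
  simp only [smul_eq_mul] at this
  calc Real.exp z = Real.exp ((1 - z) * 0 + z * 1) := by norm_num
    _ ≤ (1 - z) * Real.exp 0 + z * Real.exp 1 := this
    _ = 1 + (Real.exp 1 - 1) * z := by rw [Real.exp_zero]; ring

/-- Chernoff bound for the average of `L` i.i.d. `[0,1]`-valued observables. -/
lemma chernoff_pool (p : V → ℝ) (hp : ∀ v, 0 ≤ p v) (hp1 : ∑ v, p v = 1)
    (L : ℕ) (F : V → ℝ) (hF0 : ∀ v, 0 ≤ F v) (hF1 : ∀ v, F v ≤ 1)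
    {μ a : ℝ} (hμ : ∑ v, p v * F v ≤ μ) (hμ0 : 0 ≤ μ)
    (ha : 2 * (Real.exp 1 - 1) * μ ≤ a) :
    ∑ c : Fin L → V, (∏ j, p (c j)) * (if (L : ℝ) * a < ∑ j, F (c j) then 1 else 0)
      ≤ Real.exp (-((L : ℝ) * a) / 2) := by
  have hind : ∀ c : Fin L → V, (∏ j, p (c j)) * (if (L : ℝ) * a < ∑ j, F (c j) then 1 else 0)
      ≤ (∏ j, p (c j)) * Real.exp (∑ j, F (c j) - (L : ℝ) * a) := by
    intro c
    refine mul_le_mul_of_nonneg_left ?_ (Finset.prod_nonneg fun j _ => hp _)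
    by_cases h : (L : ℝ) * a < ∑ j, F (c j)
    · rw [if_pos h]
      rw [show (1:ℝ) = Real.exp 0 from Real.exp_zero.symm]
      exact Real.exp_le_exp.2 (by linarith)
    · rw [if_neg h]; exact (Real.exp_pos _).le
  have step1 : ∑ c : Fin L → V, (∏ j, p (c j)) * (if (L : ℝ) * a < ∑ j, F (c j) then 1 else 0)
      ≤ Real.exp (-((L : ℝ) * a)) * (∑ v, p v * Real.exp (F v)) ^ L := by
    calc ∑ c : Fin L → V, (∏ j, p (c j)) * (if (L : ℝ) * a < ∑ j, F (c j) then 1 else 0)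
        ≤ ∑ c : Fin L → V, (∏ j, p (c j)) * Real.exp (∑ j, F (c j) - (L : ℝ) * a) :=
          Finset.sum_le_sum fun c _ => hind c
      _ = Real.exp (-((L : ℝ) * a)) * ∑ c : Fin L → V, ∏ j, (p (c j) * Real.exp (F (c j))) := by
          rw [Finset.mul_sum]
          refine Finset.sum_congr rfl fun c _ => ?_
          rw [Finset.prod_mul_distrib, sub_eq_add_neg, Real.exp_add, Real.exp_sum]
          ring
      _ = Real.exp (-((L : ℝ) * a)) * (∑ v, p v * Real.exp (F v)) ^ L := by
          rw [sum_fn_prod_const (fun v => p v * Real.exp (F v)), Fintype.card_fin]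
  have hB : ∑ v, p v * Real.exp (F v) ≤ Real.exp ((Real.exp 1 - 1) * μ) := by
    have h1 : ∑ v, p v * Real.exp (F v) ≤ ∑ v, p v * (1 + (Real.exp 1 - 1) * F v) :=
      Finset.sum_le_sum fun v _ => mul_le_mul_of_nonneg_left
        (exp_le_one_add (hF0 v) (hF1 v)) (hp v)
    have h2 : ∑ v, p v * (1 + (Real.exp 1 - 1) * F v)
        = 1 + (Real.exp 1 - 1) * ∑ v, p v * F v := by
      rw [Finset.sum_congr rfl (fun v _ => by ring :
        ∀ v ∈ univ, p v * (1 + (Real.exp 1 - 1) * F v)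
          = p v + (Real.exp 1 - 1) * (p v * F v)), Finset.sum_add_distrib, hp1,
        ← Finset.mul_sum]
    have h3 : (1:ℝ) + (Real.exp 1 - 1) * ∑ v, p v * F v
        ≤ 1 + (Real.exp 1 - 1) * μ := by
      have he1 : (0:ℝ) ≤ Real.exp 1 - 1 := by
        have := Real.one_le_exp (le_of_lt one_pos)
        linarith
      nlinarith
    calc ∑ v, p v * Real.exp (F v) ≤ 1 + (Real.exp 1 - 1) * μ := by linarith
      _ ≤ Real.exp ((Real.exp 1 - 1) * μ) := by
          have := Real.add_one_le_exp ((Real.exp 1 - 1) * μ)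
          linarith
  have hBnn : 0 ≤ ∑ v, p v * Real.exp (F v) :=
    Finset.sum_nonneg fun v _ => mul_nonneg (hp v) (Real.exp_pos _).le
  have step2 : (∑ v, p v * Real.exp (F v)) ^ L ≤ Real.exp ((L:ℝ) * ((Real.exp 1 - 1) * μ)) := by
    calc (∑ v, p v * Real.exp (F v)) ^ L ≤ (Real.exp ((Real.exp 1 - 1) * μ)) ^ L :=
          pow_le_pow_left₀ hBnn hB L
      _ = Real.exp ((L:ℝ) * ((Real.exp 1 - 1) * μ)) := (Real.exp_nat_mul _ L).symm
  calc ∑ c : Fin L → V, (∏ j, p (c j)) * (if (L : ℝ) * a < ∑ j, F (c j) then 1 else 0)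
      ≤ Real.exp (-((L : ℝ) * a)) * (∑ v, p v * Real.exp (F v)) ^ L := step1
    _ ≤ Real.exp (-((L : ℝ) * a)) * Real.exp ((L:ℝ) * ((Real.exp 1 - 1) * μ)) :=
        mul_le_mul_of_nonneg_left step2 (Real.exp_pos _).le
    _ = Real.exp ((L:ℝ) * ((Real.exp 1 - 1) * μ) - (L : ℝ) * a) := by
        rw [← Real.exp_add]; ring_nf
    _ ≤ Real.exp (-((L : ℝ) * a) / 2) := by
        refine Real.exp_le_exp.2 ?_
        have hL : (0:ℝ) ≤ (L:ℝ) := Nat.cast_nonneg L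
        nlinarith

end pooling

section marg
variable {I A : Type} [DecidableEq I] [Fintype I] [Fintype A]

lemma prod_split (f : I → ℝ) (m : I) :
    ∏ k, f k = f m * ∏ j : {j // j ≠ m}, f (j : I) := by
  rw [← Finset.mul_prod_erase univ f (mem_univ m)]
  congr 1
  exact Finset.prod_subtype (p := fun j => j ≠ m) (univ.erase m)
    (fun j => by simp [Finset.mem_erase]) f

lemma marg_one (q : A → ℝ) (hq : ∑ a, q a = 1) (m : I) (G : A → ℝ) :
    ∑ ω : I → A, (∏ k, q (ω k)) * G (ω m) = ∑ a, q a * G a := by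
  rw [Fintype.sum_equiv (Equiv.piSplitAt m (fun _ => A))
    (fun ω : I → A => (∏ k, q (ω k)) * G (ω m))
    (fun p : A × ({j // j ≠ m} → A) =>
      (q p.1 * ∏ j : {j // j ≠ m}, q (p.2 j)) * G p.1)
    (fun ω => by
      show (∏ k, q (ω k)) * G (ω m)
        = (q (ω m) * ∏ j : {j // j ≠ m}, q (ω (j : I))) * G (ω m)
      rw [prod_split (fun k => q (ω k)) m])]
  rw [Fintype.sum_prod_type]
  refine Finset.sum_congr rfl fun a _ => ?_
  have : ∑ r : {j // j ≠ m} → A, (q a * ∏ j : {j // j ≠ m}, q (r j)) * G a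
      = (q a * G a) * ∑ r : {j // j ≠ m} → A, ∏ j : {j // j ≠ m}, q (r j) := by
    rw [Finset.mul_sum]
    exact Finset.sum_congr rfl fun r _ => by ring
  rw [this, sum_fn_prod (fun (_ : {j // j ≠ m}) a => q a)]
  simp [hq]

lemma marg_two (q : A → ℝ) (hq : ∑ a, q a = 1) {m m' : I} (hne : m' ≠ m)
    (G : A → A → ℝ) :
    ∑ ω : I → A, (∏ k, q (ω k)) * G (ω m) (ω m')
      = ∑ a, ∑ b, (q a * q b) * G a b := by
  rw [Fintype.sum_equiv (Equiv.piSplitAt m (fun _ => A))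
    (fun ω : I → A => (∏ k, q (ω k)) * G (ω m) (ω m'))
    (fun p : A × ({j // j ≠ m} → A) =>
      q p.1 * ((∏ j : {j // j ≠ m}, q (p.2 j)) * G p.1 (p.2 ⟨m', hne⟩)))
    (fun ω => by
      show (∏ k, q (ω k)) * G (ω m) (ω m')
        = q (ω m) * ((∏ j : {j // j ≠ m}, q (ω (j : I))) * G (ω m) (ω m'))
      rw [prod_split (fun k => q (ω k)) m]; ring)]
  rw [Fintype.sum_prod_type]
  refine Finset.sum_congr rfl fun a _ => ?_
  show ∑ r : {j // j ≠ m} → A,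
      q a * ((∏ j : {j // j ≠ m}, q (r j)) * G a (r ⟨m', hne⟩))
      = ∑ b : A, (q a * q b) * G a b
  rw [← Finset.mul_sum, marg_one q hq (⟨m', hne⟩ : {j // j ≠ m}) (fun b => G a b),
    Finset.mul_sum]
  exact Finset.sum_congr rfl fun b _ => by ring

end marg

section pool
variable {X Y : Type} [Fintype X] [Fintype Y] {P : X → ℝ} {W : X → Y → ℝ}

/-- The ID decoding set: union of the typical sets of the codewords in the pool. -/
def poolD (P : X → ℝ) (W : X → Y → ℝ) (c : ℝ) (n L : ℕ) (r : Fin L → (Fin n → X)) :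
    Finset (Fin n → Y) :=
  univ.filter (fun y => ∃ j, y ∈ Tset P W c n (r j))

lemma Tset_subset_poolD (c : ℝ) (n L : ℕ) (r : Fin L → (Fin n → X)) (j : Fin L) :
    Tset P W c n (r j) ⊆ poolD P W c n L r := by
  intro y hy
  rw [poolD, Finset.mem_filter]
  exact ⟨Finset.mem_univ y, j, hy⟩

lemma poolD_marginal (hW : IsChannel W) (hP : IsPMF P) {c : ℝ} (hc : 0 < c)
    (n L : ℕ) (r : Fin L → (Fin n → X)) :
    ∑ v : Fin n → X, PnD P n v * ∑ y ∈ poolD P W c n L r, Wn W n v y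
      ≤ (L : ℝ) * c⁻¹ := by
  have e1 : ∑ v : Fin n → X, PnD P n v * ∑ y ∈ poolD P W c n L r, Wn W n v y
      = ∑ y ∈ poolD P W c n L r, PnY P W n y := by
    rw [Finset.sum_congr rfl (fun v _ => Finset.mul_sum _ _ _), Finset.sum_comm]
    exact Finset.sum_congr rfl fun y _ => PnY_marginal n y
  rw [e1]
  have e2 : ∑ y ∈ poolD P W c n L r, PnY P W n y
      ≤ ∑ j : Fin L, ∑ y ∈ Tset P W c n (r j), PnY P W n y := by
    have hpt : ∀ y ∈ poolD P W c n L r,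
        PnY P W n y ≤ ∑ j : Fin L, (if y ∈ Tset P W c n (r j) then PnY P W n y else 0) := by
      intro y hy
      rw [poolD, Finset.mem_filter] at hy
      obtain ⟨-, j₀, hj₀⟩ := hy
      calc PnY P W n y
          = (if y ∈ Tset P W c n (r j₀) then PnY P W n y else 0) := (if_pos hj₀).symm
        _ ≤ ∑ j : Fin L, (if y ∈ Tset P W c n (r j) then PnY P W n y else 0) := by
            refine Finset.single_le_sum (f := fun j =>
              if y ∈ Tset P W c n (r j) then PnY P W n y else 0) ?_ (Finset.mem_univ j₀)
            intro j _
            beta_reduce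
            by_cases h : y ∈ Tset P W c n (r j)
            · rw [if_pos h]; exact PnY_nonneg hW hP n y
            · rw [if_neg h]
    calc ∑ y ∈ poolD P W c n L r, PnY P W n y
        ≤ ∑ y ∈ poolD P W c n L r,
            ∑ j : Fin L, (if y ∈ Tset P W c n (r j) then PnY P W n y else 0) :=
          Finset.sum_le_sum hpt
      _ = ∑ j : Fin L, ∑ y ∈ poolD P W c n L r,
            (if y ∈ Tset P W c n (r j) then PnY P W n y else 0) := Finset.sum_comm
      _ ≤ ∑ j : Fin L, ∑ y ∈ Tset P W c n (r j), PnY P W n y := by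
          refine Finset.sum_le_sum fun j _ => ?_
          rw [Finset.sum_ite_mem]
          refine Finset.sum_le_sum_of_subset_of_nonneg
            (Finset.inter_subset_right) (fun y _ _ => PnY_nonneg hW hP n y)
  calc ∑ y ∈ poolD P W c n L r, PnY P W n y
      ≤ ∑ j : Fin L, ∑ y ∈ Tset P W c n (r j), PnY P W n y := e2
    _ ≤ ∑ j : Fin L, c⁻¹ := Finset.sum_le_sum fun j _ => Tset_marginal_le hW hc n (r j)
    _ = (L : ℝ) * c⁻¹ := by rw [Finset.sum_const, Finset.card_univ, Fintype.card_fin,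
        nsmul_eq_mul]

end pool

section codebook
variable {V : Type} [Fintype V]

/-- Abstract random-coding existence: a codebook avoiding all bad events exists. -/
lemma exists_good_codebook (p : V → ℝ) (hp : ∀ v, 0 ≤ p v) (hp1 : ∑ v, p v = 1)
    (L M : ℕ) (F₁ : V → ℝ) (F₂ : (Fin L → V) → V → ℝ)
    (hF₁0 : ∀ v, 0 ≤ F₁ v) (hF₁1 : ∀ v, F₁ v ≤ 1)
    (hF₂0 : ∀ r v, 0 ≤ F₂ r v) (hF₂1 : ∀ r v, F₂ r v ≤ 1)
    {μ₁ μ₂ a₁ a₂ : ℝ} (hμ₁0 : 0 ≤ μ₁) (hμ₂0 : 0 ≤ μ₂)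
    (hmean1 : ∑ v, p v * F₁ v ≤ μ₁) (hmean2 : ∀ r, ∑ v, p v * F₂ r v ≤ μ₂)
    (hcond1 : 2 * (Real.exp 1 - 1) * μ₁ ≤ a₁) (hcond2 : 2 * (Real.exp 1 - 1) * μ₂ ≤ a₂)
    (hsmall : (M:ℝ) * Real.exp (-((L:ℝ) * a₁)/2)
        + (M:ℝ) * (M:ℝ) * Real.exp (-((L:ℝ) * a₂)/2) < 1) :
    ∃ ω : Fin M → Fin L → V,
      (∀ m, ∑ j, F₁ (ω m j) ≤ (L:ℝ) * a₁) ∧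
      (∀ m m', m ≠ m' → ∑ j, F₂ (ω m') (ω m j) ≤ (L:ℝ) * a₂) := by
  classical
  let A := Fin L → V
  set q : (Fin L → V) → ℝ := fun r => ∏ j, p (r j) with hqdef
  have hq0 : ∀ r, 0 ≤ q r := fun r => Finset.prod_nonneg fun j _ => hp _
  have hq1 : ∑ r : A, q r = 1 := by
    rw [hqdef]
    rw [sum_fn_prod (fun (_ : Fin L) v => p v)]
    simp [hp1]
  set μm : (Fin M → A) → ℝ := fun ω => ∏ m, q (ω m) with hμmdef
  have hμm0 : ∀ ω, 0 ≤ μm ω := fun ω => Finset.prod_nonneg fun m _ => hq0 _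
  have hμm1 : ∑ ω : Fin M → A, μm ω = 1 := by
    rw [hμmdef, sum_fn_prod (fun (_ : Fin M) r => q r)]
    simp [hq1]
    exact (congrArg (fun s => s ^ M) hq1).trans (one_pow M)
  set E₁ := Real.exp (-((L:ℝ) * a₁)/2) with hE₁def
  set E₂ := Real.exp (-((L:ℝ) * a₂)/2) with hE₂def
  set Bad : (Fin M → A) → Prop := fun ω =>
    (∃ m, (L:ℝ) * a₁ < ∑ j, F₁ (ω m j)) ∨
    (∃ m m', m ≠ m' ∧ (L:ℝ) * a₂ < ∑ j, F₂ (ω m') (ω m j)) with hBaddef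
  -- single bad-event bounds
  have hS1 : ∀ m : Fin M,
      ∑ ω : Fin M → A, μm ω * (if (L:ℝ) * a₁ < ∑ j, F₁ (ω m j) then 1 else 0) ≤ E₁ := by
    intro m
    rw [hμmdef]
    rw [marg_one q hq1 m (fun r => if (L:ℝ) * a₁ < ∑ j, F₁ (r j) then 1 else 0)]
    exact chernoff_pool p hp hp1 L F₁ hF₁0 hF₁1 hmean1 hμ₁0 hcond1
  have hS2 : ∀ m m' : Fin M, m ≠ m' →
      ∑ ω : Fin M → A, μm ω * (if (L:ℝ) * a₂ < ∑ j, F₂ (ω m') (ω m j) then 1 else 0)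
        ≤ E₂ := by
    intro m m' hne
    rw [hμmdef]
    rw [marg_two q hq1 (Ne.symm hne)
      (fun r r' => if (L:ℝ) * a₂ < ∑ j, F₂ r' (r j) then 1 else 0)]
    have hswap : ∑ r : A, ∑ r' : A,
        (q r * q r') * (if (L:ℝ) * a₂ < ∑ j, F₂ r' (r j) then 1 else 0)
        = ∑ r' : A, q r' * ∑ r : A,
          q r * (if (L:ℝ) * a₂ < ∑ j, F₂ r' (r j) then 1 else 0) := by
      rw [Finset.sum_comm]
      refine Finset.sum_congr rfl fun r' _ => ?_
      rw [Finset.mul_sum]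
      exact Finset.sum_congr rfl fun r _ => by ring
    rw [hswap]
    calc ∑ r' : A, q r' * ∑ r : A,
          q r * (if (L:ℝ) * a₂ < ∑ j, F₂ r' (r j) then 1 else 0)
        ≤ ∑ r' : A, q r' * E₂ := by
          refine Finset.sum_le_sum fun r' _ => ?_
          refine mul_le_mul_of_nonneg_left ?_ (hq0 r')
          exact chernoff_pool p hp hp1 L (F₂ r') (hF₂0 r') (hF₂1 r')
            (hmean2 r') hμ₂0 hcond2
      _ = E₂ := by rw [← Finset.sum_mul, hq1, one_mul]
  -- union bound
  have hunion : ∑ ω ∈ univ.filter Bad, μm ω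
      ≤ (M:ℝ) * E₁ + (M:ℝ) * (M:ℝ) * E₂ := by
    have hpt : ∀ ω ∈ univ.filter Bad, μm ω ≤ μm ω *
        ((∑ m : Fin M, (if (L:ℝ) * a₁ < ∑ j, F₁ (ω m j) then (1:ℝ) else 0)) +
         ∑ mm : Fin M × Fin M, (if mm.1 ≠ mm.2 ∧
            (L:ℝ) * a₂ < ∑ j, F₂ (ω mm.2) (ω mm.1 j) then (1:ℝ) else 0)) := by
      intro ω hω
      rw [Finset.mem_filter] at hω
      have h1nn : ∀ m : Fin M,
          (0:ℝ) ≤ (if (L:ℝ) * a₁ < ∑ j, F₁ (ω m j) then (1:ℝ) else 0) := by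
        intro m; split <;> norm_num
      have h2nn : ∀ mm : Fin M × Fin M, (0:ℝ) ≤ (if mm.1 ≠ mm.2 ∧
          (L:ℝ) * a₂ < ∑ j, F₂ (ω mm.2) (ω mm.1 j) then (1:ℝ) else 0) := by
        intro mm; split <;> norm_num
      have hone : (1:ℝ) ≤
          (∑ m : Fin M, (if (L:ℝ) * a₁ < ∑ j, F₁ (ω m j) then (1:ℝ) else 0)) +
          ∑ mm : Fin M × Fin M, (if mm.1 ≠ mm.2 ∧
            (L:ℝ) * a₂ < ∑ j, F₂ (ω mm.2) (ω mm.1 j) then (1:ℝ) else 0) := by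
        rcases hω.2 with ⟨m, hm⟩ | ⟨m, m', hne, hmm⟩
        · have : (1:ℝ) ≤ ∑ m : Fin M,
              (if (L:ℝ) * a₁ < ∑ j, F₁ (ω m j) then (1:ℝ) else 0) := by
            calc (1:ℝ) = (if (L:ℝ) * a₁ < ∑ j, F₁ (ω m j) then (1:ℝ) else 0) :=
                  (if_pos hm).symm
              _ ≤ _ := Finset.single_le_sum (fun i _ => h1nn i) (Finset.mem_univ m)
          have h2 : (0:ℝ) ≤ ∑ mm : Fin M × Fin M, (if mm.1 ≠ mm.2 ∧
              (L:ℝ) * a₂ < ∑ j, F₂ (ω mm.2) (ω mm.1 j) then (1:ℝ) else 0) :=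
            Finset.sum_nonneg fun mm _ => h2nn mm
          linarith
        · have : (1:ℝ) ≤ ∑ mm : Fin M × Fin M, (if mm.1 ≠ mm.2 ∧
              (L:ℝ) * a₂ < ∑ j, F₂ (ω mm.2) (ω mm.1 j) then (1:ℝ) else 0) := by
            calc (1:ℝ) = (if (m, m').1 ≠ (m, m').2 ∧
                (L:ℝ) * a₂ < ∑ j, F₂ (ω (m, m').2) (ω (m, m').1 j) then (1:ℝ) else 0) :=
                  (if_pos ⟨hne, hmm⟩).symm
              _ ≤ _ := Finset.single_le_sum (fun i _ => h2nn i) (Finset.mem_univ (m, m'))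
          have h1 : (0:ℝ) ≤ ∑ m : Fin M,
              (if (L:ℝ) * a₁ < ∑ j, F₁ (ω m j) then (1:ℝ) else 0) :=
            Finset.sum_nonneg fun m _ => h1nn m
          linarith
      calc μm ω = μm ω * 1 := (mul_one _).symm
        _ ≤ _ := mul_le_mul_of_nonneg_left hone (hμm0 ω)
    calc ∑ ω ∈ univ.filter Bad, μm ω
        ≤ ∑ ω ∈ univ.filter Bad, μm ω *
          ((∑ m : Fin M, (if (L:ℝ) * a₁ < ∑ j, F₁ (ω m j) then (1:ℝ) else 0)) +
           ∑ mm : Fin M × Fin M, (if mm.1 ≠ mm.2 ∧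
              (L:ℝ) * a₂ < ∑ j, F₂ (ω mm.2) (ω mm.1 j) then (1:ℝ) else 0)) :=
          Finset.sum_le_sum hpt
      _ ≤ ∑ ω : Fin M → A, μm ω *
          ((∑ m : Fin M, (if (L:ℝ) * a₁ < ∑ j, F₁ (ω m j) then (1:ℝ) else 0)) +
           ∑ mm : Fin M × Fin M, (if mm.1 ≠ mm.2 ∧
              (L:ℝ) * a₂ < ∑ j, F₂ (ω mm.2) (ω mm.1 j) then (1:ℝ) else 0)) := by
          refine Finset.sum_le_sum_of_subset_of_nonneg (Finset.filter_subset _ _) ?_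
          intro ω _ _
          refine mul_nonneg (hμm0 ω) (add_nonneg (Finset.sum_nonneg fun m _ => by
            split <;> norm_num) (Finset.sum_nonneg fun mm _ => by split <;> norm_num))
      _ = (∑ m : Fin M, ∑ ω : Fin M → A, μm ω *
            (if (L:ℝ) * a₁ < ∑ j, F₁ (ω m j) then (1:ℝ) else 0)) +
          ∑ mm : Fin M × Fin M, ∑ ω : Fin M → A, μm ω *
            (if mm.1 ≠ mm.2 ∧ (L:ℝ) * a₂ < ∑ j, F₂ (ω mm.2) (ω mm.1 j)
              then (1:ℝ) else 0) := by
          have e1 : ∀ ω : Fin M → A, μm ω *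
              ((∑ m : Fin M, (if (L:ℝ) * a₁ < ∑ j, F₁ (ω m j) then (1:ℝ) else 0)) +
               ∑ mm : Fin M × Fin M, (if mm.1 ≠ mm.2 ∧
                  (L:ℝ) * a₂ < ∑ j, F₂ (ω mm.2) (ω mm.1 j) then (1:ℝ) else 0))
              = (∑ m : Fin M, μm ω *
                  (if (L:ℝ) * a₁ < ∑ j, F₁ (ω m j) then (1:ℝ) else 0)) +
                ∑ mm : Fin M × Fin M, μm ω *
                  (if mm.1 ≠ mm.2 ∧ (L:ℝ) * a₂ < ∑ j, F₂ (ω mm.2) (ω mm.1 j)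
                    then (1:ℝ) else 0) := by
            intro ω
            rw [mul_add, Finset.mul_sum, Finset.mul_sum]
          rw [Finset.sum_congr rfl (fun ω _ => e1 ω), Finset.sum_add_distrib]
          congr 1
          · exact Finset.sum_comm
          · exact Finset.sum_comm
      _ ≤ (M:ℝ) * E₁ + (M:ℝ) * (M:ℝ) * E₂ := by
          have t1 : (∑ m : Fin M, ∑ ω : Fin M → A, μm ω *
              (if (L:ℝ) * a₁ < ∑ j, F₁ (ω m j) then (1:ℝ) else 0)) ≤ (M:ℝ) * E₁ := by
            calc (∑ m : Fin M, ∑ ω : Fin M → A, μm ω *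
                (if (L:ℝ) * a₁ < ∑ j, F₁ (ω m j) then (1:ℝ) else 0))
                ≤ ∑ _m : Fin M, E₁ := Finset.sum_le_sum fun m _ => hS1 m
              _ = (M:ℝ) * E₁ := by
                  rw [Finset.sum_const, Finset.card_univ, Fintype.card_fin, nsmul_eq_mul]
          have t2 : (∑ mm : Fin M × Fin M, ∑ ω : Fin M → A, μm ω *
              (if mm.1 ≠ mm.2 ∧ (L:ℝ) * a₂ < ∑ j, F₂ (ω mm.2) (ω mm.1 j)
                then (1:ℝ) else 0)) ≤ (M:ℝ) * (M:ℝ) * E₂ := by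
            have hper : ∀ mm : Fin M × Fin M, ∑ ω : Fin M → A, μm ω *
                (if mm.1 ≠ mm.2 ∧ (L:ℝ) * a₂ < ∑ j, F₂ (ω mm.2) (ω mm.1 j)
                  then (1:ℝ) else 0) ≤ E₂ := by
              intro mm
              by_cases h : mm.1 = mm.2
              · have hz : ∀ ω : Fin M → A, μm ω *
                    (if mm.1 ≠ mm.2 ∧ (L:ℝ) * a₂ < ∑ j, F₂ (ω mm.2) (ω mm.1 j)
                      then (1:ℝ) else 0) = 0 := by
                  intro ω
                  rw [if_neg (fun hc => hc.1 h), mul_zero]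
                rw [Finset.sum_congr rfl (fun ω _ => hz ω), Finset.sum_const, smul_zero]
                exact (Real.exp_pos _).le
              · have hcongr : ∀ ω : Fin M → A,
                    (if mm.1 ≠ mm.2 ∧ (L:ℝ) * a₂ < ∑ j, F₂ (ω mm.2) (ω mm.1 j)
                      then (1:ℝ) else 0)
                    = (if (L:ℝ) * a₂ < ∑ j, F₂ (ω mm.2) (ω mm.1 j) then (1:ℝ) else 0) := by
                  intro ω
                  exact if_congr (and_iff_right h) rfl rfl
                rw [Finset.sum_congr rfl (fun ω _ => by rw [hcongr ω])]
                exact hS2 mm.1 mm.2 h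
            calc (∑ mm : Fin M × Fin M, ∑ ω : Fin M → A, μm ω *
                (if mm.1 ≠ mm.2 ∧ (L:ℝ) * a₂ < ∑ j, F₂ (ω mm.2) (ω mm.1 j)
                  then (1:ℝ) else 0))
                ≤ ∑ _mm : Fin M × Fin M, E₂ := Finset.sum_le_sum fun mm _ => hper mm
              _ = (M:ℝ) * (M:ℝ) * E₂ := by
                  rw [Finset.sum_const, Finset.card_univ, Fintype.card_prod, Fintype.card_fin,
                    nsmul_eq_mul]
                  push_cast
                  ring
          linarith
  have hlt : ∑ ω ∈ univ.filter Bad, μm ω < 1 := lt_of_le_of_lt hunion hsmall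
  have hex : ∃ ω : Fin M → A, ¬ Bad ω := by
    by_contra hcon
    push_neg at hcon
    have heq : univ.filter Bad = univ := Finset.filter_true_of_mem (fun ω _ => hcon ω)
    rw [heq, hμm1] at hlt
    exact lt_irrefl 1 hlt
  obtain ⟨ω, hω⟩ := hex
  rw [hBaddef] at hω
  rcases not_or.1 hω with ⟨h1, h2⟩
  push_neg at h1 h2
  exact ⟨ω, fun m => h1 m, fun m m' hne => h2 m m' hne⟩

end codebook

lemma sum_empirical {V : Type} [Fintype V] [DecidableEq V] (L : ℕ) (r : Fin L → V) (g : V → ℝ) :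
    ∑ x : V, (∑ j : Fin L, if r j = x then (1:ℝ) else 0) * g x = ∑ j, g (r j) := by
  classical
  have e1 : ∀ x : V, (∑ j : Fin L, if r j = x then (1:ℝ) else 0) * g x
      = ∑ j : Fin L, (if r j = x then g x else 0) := by
    intro x
    rw [Finset.sum_mul]
    refine Finset.sum_congr rfl fun j _ => ?_
    by_cases h : r j = x
    · rw [if_pos h, if_pos h, one_mul]
    · rw [if_neg h, if_neg h, zero_mul]
  rw [Finset.sum_congr rfl (fun x _ => e1 x), Finset.sum_comm]
  refine Finset.sum_congr rfl fun j _ => ?_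
  have : ∀ x : V, (if r j = x then g x else 0) = (if r j = x then g (r j) else 0) := by
    intro x
    by_cases h : r j = x
    · rw [if_pos h, if_pos h, h]
    · rw [if_neg h, if_neg h]
  rw [Finset.sum_congr rfl (fun x _ => this x), Finset.sum_ite_eq, if_pos (Finset.mem_univ _)]

set_option maxHeartbeats 2000000 in
/-- For every DMC `W`, input PMF `P`, and rate `0 < R < I(P,W)`,
there are `τ > 0` and `n₀` such that for every blocklength `n ≥ n₀` there is an
`(n, ℳ, e^{-nτ}, e^{-nτ})` ID code for `W` with `(1/n) log log |ℳ| ≥ R`. -/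
theorem dmc_id_achievability
    {X Y : Type} [Fintype X] [Fintype Y] [Nonempty X] [Nonempty Y]
    (W : X → Y → ℝ) (hW : IsChannel W)
    (P : X → ℝ) (hP : IsPMF P)
    (R : ℝ) (hR0 : 0 < R) (hRI : R < mutInf P W) :
    ∃ τ : ℝ, 0 < τ ∧ ∃ n₀ : ℕ, ∀ n : ℕ, n₀ ≤ n →
      ∃ (k : ℕ) (Q : Fin k → (Fin n → X) → ℝ) (D : Fin k → Finset (Fin n → Y)),
        IsIDCode n W Q D (Real.exp (-(n * τ))) (Real.exp (-(n * τ))) ∧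
        R ≤ (1 / n) * Real.log (Real.log k) := by
  classical
  set d := (mutInf P W - R) / 5 with hd
  have hd0 : 0 < d := by rw [hd]; linarith
  have hγI : R + 4 * d < mutInf P W := by rw [hd]; linarith
  obtain ⟨δ, hδ0, hqn⟩ := missed_mean_exp hW hP hγI
  set δ' := min δ d with hδ'def
  have hδ'0 : 0 < δ' := lt_min hδ0 hd0
  have hδ'd : δ' ≤ d := min_le_right _ _
  have hδ'δ : δ' ≤ δ := min_le_left _ _
  refine ⟨δ' / 2, by linarith, max 1 ⌈(8:ℝ)/δ'⌉₊, fun n hn => ?_⟩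
  -- basic facts about n
  have hn1 : 1 ≤ n := le_trans (le_max_left _ _) hn
  have hnR1 : (1:ℝ) ≤ (n:ℝ) := by exact_mod_cast hn1
  have hn0 : (0:ℝ) < (n:ℝ) := by linarith
  have hnδ' : 8 ≤ (n:ℝ) * δ' := by
    have h1 : ⌈(8:ℝ)/δ'⌉₊ ≤ n := le_trans (le_max_right _ _) hn
    have h2 : (8:ℝ)/δ' ≤ (n:ℝ) := le_trans (Nat.le_ceil _) (by exact_mod_cast h1)
    calc (8:ℝ) = (8/δ') * δ' := by field_simp
      _ ≤ (n:ℝ) * δ' := mul_le_mul_of_nonneg_right h2 hδ'0.le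
  have hnd : 8 ≤ (n:ℝ) * d := by
    calc (8:ℝ) ≤ (n:ℝ) * δ' := hnδ'
      _ ≤ (n:ℝ) * d := mul_le_mul_of_nonneg_left hδ'd hn0.le
  -- exponential numeric facts
  have hexp1lt : Real.exp 1 < 3 := by
    have := Real.exp_one_lt_d9
    linarith
  have hexp1ge : (2:ℝ) ≤ Real.exp 1 := by
    have := Real.add_one_le_exp (1:ℝ)
    linarith
  have hexp2 : (3:ℝ) ≤ Real.exp 2 := by
    have := Real.add_one_le_exp (2:ℝ)
    linarith
  have hexp8 : (81:ℝ) ≤ Real.exp 8 := by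
    have h4 : Real.exp 8 = (Real.exp 2) ^ 4 := by
      rw [← Real.exp_nat_mul]
      norm_num
    calc (81:ℝ) = 3^4 := by norm_num
      _ ≤ (Real.exp 2)^4 := pow_le_pow_left₀ (by norm_num) hexp2 4
      _ = Real.exp 8 := h4.symm
  have hexpnd : (81:ℝ) ≤ Real.exp ((n:ℝ) * d) := le_trans hexp8 (Real.exp_le_exp.2 hnd)
  have hexpnδ' : (81:ℝ) ≤ Real.exp ((n:ℝ) * δ') := le_trans hexp8 (Real.exp_le_exp.2 hnδ')
  -- parameters
  set γ := R + 4 * d with hγdef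
  set c := Real.exp ((n:ℝ) * γ) with hcdef
  have hc0 : 0 < c := Real.exp_pos _
  set L := ⌈Real.exp ((n:ℝ) * (R + 2*d))⌉₊ with hLdef
  have hLlow : Real.exp ((n:ℝ) * (R + 2*d)) ≤ (L:ℝ) := Nat.le_ceil _
  have hL1 : 1 ≤ L := by
    rw [hLdef]
    have : (0:ℝ) < Real.exp ((n:ℝ) * (R + 2*d)) := Real.exp_pos _
    exact Nat.one_le_iff_ne_zero.2 (by positivity)
  have hLpos : (0:ℝ) < (L:ℝ) := by
    have : (1:ℝ) ≤ (L:ℝ) := by exact_mod_cast hL1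
    linarith
  have hLhigh : (L:ℝ) ≤ 2 * Real.exp ((n:ℝ) * (R + 2*d)) := by
    have h1 : (L:ℝ) ≤ Real.exp ((n:ℝ) * (R + 2*d)) + 1 :=
      le_of_lt (Nat.ceil_lt_add_one (Real.exp_pos _).le)
    have h2 : (1:ℝ) ≤ Real.exp ((n:ℝ) * (R + 2*d)) :=
      Real.one_le_exp (by positivity)
    linarith
  set M := ⌈Real.exp (Real.exp ((n:ℝ) * R))⌉₊ with hMdef
  set EnR := Real.exp ((n:ℝ) * R) with hEnRdef
  have hEnR1 : (1:ℝ) ≤ EnR := Real.one_le_exp (by positivity)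
  have hMlow : Real.exp EnR ≤ (M:ℝ) := Nat.le_ceil _
  have hMhigh : (M:ℝ) ≤ Real.exp (EnR + 1) := by
    have h1 : (M:ℝ) ≤ Real.exp EnR + 1 := le_of_lt (Nat.ceil_lt_add_one (Real.exp_pos _).le)
    have h2 : (1:ℝ) ≤ Real.exp EnR := Real.one_le_exp (by positivity)
    have h3 : Real.exp (EnR + 1) = Real.exp EnR * Real.exp 1 := Real.exp_add _ _
    nlinarith
  set a₁ := 4 * Real.exp (-((n:ℝ) * δ')) with ha₁def
  set a₂ := Real.exp (-((n:ℝ) * d)) with ha₂def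
  -- the random-coding functionals
  set p := PnD P n with hpdef
  set F₁ := fun v : Fin n → X => ∑ y ∈ (Tset P W c n v)ᶜ, Wn W n v y with hF₁def
  set F₂ := fun (r : Fin L → Fin n → X) (v : Fin n → X) =>
    ∑ y ∈ poolD P W c n L r, Wn W n v y with hF₂def
  have hF₁0 : ∀ v, 0 ≤ F₁ v := fun v =>
    Finset.sum_nonneg fun y _ => Wn_nonneg hW n v y
  have hF₁1 : ∀ v, F₁ v ≤ 1 := fun v => Wn_sum_subset_le_one hW n v _
  have hF₂0 : ∀ r v, 0 ≤ F₂ r v := fun r v =>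
    Finset.sum_nonneg fun y _ => Wn_nonneg hW n v y
  have hF₂1 : ∀ r v, F₂ r v ≤ 1 := fun r v => Wn_sum_subset_le_one hW n v _
  have hmean1 : ∑ v, p v * F₁ v ≤ Real.exp (-((n:ℝ) * δ')) := by
    calc ∑ v, p v * F₁ v ≤ Real.exp (-((n:ℝ) * δ)) := hqn n
      _ ≤ Real.exp (-((n:ℝ) * δ')) := by
          refine Real.exp_le_exp.2 ?_
          have : (n:ℝ) * δ' ≤ (n:ℝ) * δ := mul_le_mul_of_nonneg_left hδ'δ hn0.le
          linarith
  have hmean2 : ∀ r, ∑ v, p v * F₂ r v ≤ (L:ℝ) * Real.exp (-((n:ℝ) * γ)) := by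
    intro r
    have := poolD_marginal hW hP hc0 n L r
    rw [hcdef, ← Real.exp_neg] at this
    exact this
  -- Chernoff side conditions
  have hcond1 : 2 * (Real.exp 1 - 1) * Real.exp (-((n:ℝ) * δ')) ≤ a₁ := by
    rw [ha₁def]
    nlinarith [Real.exp_pos (-((n:ℝ) * δ'))]
  have hcond2 : 2 * (Real.exp 1 - 1) * ((L:ℝ) * Real.exp (-((n:ℝ) * γ))) ≤ a₂ := by
    have key1 : Real.exp ((n:ℝ) * (R + 2*d)) * Real.exp (-((n:ℝ) * γ))
        = Real.exp (-((n:ℝ) * d)) * Real.exp (-((n:ℝ) * d)) := by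
      rw [← Real.exp_add, ← Real.exp_add, hγdef]
      congr 1
      ring
    have hexpneg : Real.exp (-((n:ℝ) * d)) * Real.exp ((n:ℝ) * d) = 1 := by
      rw [← Real.exp_add]
      simp
    have hu0 : (0:ℝ) < Real.exp (-((n:ℝ) * d)) := Real.exp_pos _
    have hu81 : Real.exp (-((n:ℝ) * d)) ≤ 1/81 := by
      rw [div_eq_inv_mul, mul_one]
      rw [show Real.exp (-((n:ℝ)*d)) = (Real.exp ((n:ℝ)*d))⁻¹ from Real.exp_neg _]
      exact inv_anti₀ (by norm_num) hexpnd
    have hL2 : (L:ℝ) * Real.exp (-((n:ℝ) * γ))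
        ≤ 2 * (Real.exp (-((n:ℝ) * d)) * Real.exp (-((n:ℝ) * d))) := by
      rw [← key1]
      nlinarith [Real.exp_pos (-((n:ℝ) * γ))]
    rw [ha₂def]
    nlinarith [hu0, hu81, hexp1lt]
  -- smallness of total failure probability
  have hLa₁ : 162 * EnR ≤ ((L:ℝ) * a₁) / 2 := by
    have h1 : Real.exp ((n:ℝ)*(R + 2*d)) * Real.exp (-((n:ℝ) * δ'))
        = EnR * (Real.exp ((n:ℝ)*d) * (Real.exp ((n:ℝ)*(d - δ')))) := by
      rw [hEnRdef, ← Real.exp_add, ← Real.exp_add, ← Real.exp_add]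
      congr 1
      ring
    have h2 : (1:ℝ) ≤ Real.exp ((n:ℝ)*(d - δ')) :=
      Real.one_le_exp (mul_nonneg hn0.le (by linarith))
    have h81 : (81:ℝ) ≤ Real.exp ((n:ℝ)*d) * Real.exp ((n:ℝ)*(d - δ')) := by
      calc (81:ℝ) = 81 * 1 := by ring
        _ ≤ Real.exp ((n:ℝ)*d) * Real.exp ((n:ℝ)*(d - δ')) :=
            mul_le_mul hexpnd h2 (by norm_num) (Real.exp_pos _).le
    have hE0 : (0:ℝ) ≤ EnR := by linarith
    have h3 : Real.exp ((n:ℝ)*(R + 2*d)) * Real.exp (-((n:ℝ) * δ')) ≥ 81 * EnR := by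
      rw [h1]
      nlinarith [mul_le_mul_of_nonneg_left h81 hE0]
    have h4 : (L:ℝ) * a₁ ≥ 4 * (81 * EnR) := by
      rw [ha₁def]
      have := mul_le_mul_of_nonneg_right hLlow (le_of_lt (Real.exp_pos (-((n:ℝ) * δ'))))
      nlinarith [Real.exp_pos (-((n:ℝ) * δ'))]
    linarith
  have hLa₂ : 40 * EnR ≤ ((L:ℝ) * a₂) / 2 := by
    have h1 : Real.exp ((n:ℝ)*(R + 2*d)) * Real.exp (-((n:ℝ) * d))
        = EnR * Real.exp ((n:ℝ)*d) := by
      rw [hEnRdef, ← Real.exp_add, ← Real.exp_add]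
      congr 1
      ring
    have h3 : (L:ℝ) * a₂ ≥ 81 * EnR := by
      rw [ha₂def]
      have := mul_le_mul_of_nonneg_right hLlow (le_of_lt (Real.exp_pos (-((n:ℝ) * d))))
      nlinarith [Real.exp_pos (-((n:ℝ) * d))]
    linarith
  have hexpm2 : Real.exp (-2 : ℝ) ≤ 1/3 := by
    have h1 : Real.exp (-2:ℝ) * Real.exp (2:ℝ) = 1 := by
      rw [← Real.exp_add]; simp
    nlinarith [Real.exp_pos (-2:ℝ)]
  have hsmall : (M:ℝ) * Real.exp (-((L:ℝ) * a₁)/2)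
      + (M:ℝ) * (M:ℝ) * Real.exp (-((L:ℝ) * a₂)/2) < 1 := by
    have hMpos : (0:ℝ) < (M:ℝ) := lt_of_lt_of_le (Real.exp_pos _) hMlow
    have t1 : (M:ℝ) * Real.exp (-((L:ℝ) * a₁)/2) ≤ Real.exp (-2 : ℝ) := by
      calc (M:ℝ) * Real.exp (-((L:ℝ) * a₁)/2)
          ≤ Real.exp (EnR + 1) * Real.exp (-(162 * EnR)) := by
            refine mul_le_mul hMhigh (Real.exp_le_exp.2 (by linarith)) (Real.exp_pos _).le
              (Real.exp_pos _).le
        _ = Real.exp (EnR + 1 - 162 * EnR) := by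
            rw [← Real.exp_add]
            congr 1
            all_goals ring
        _ ≤ Real.exp (-2 : ℝ) := Real.exp_le_exp.2 (by nlinarith)
    have t2 : (M:ℝ) * (M:ℝ) * Real.exp (-((L:ℝ) * a₂)/2) ≤ Real.exp (-2 : ℝ) := by
      calc (M:ℝ) * (M:ℝ) * Real.exp (-((L:ℝ) * a₂)/2)
          ≤ Real.exp (EnR + 1) * Real.exp (EnR + 1) * Real.exp (-(40 * EnR)) := by
            refine mul_le_mul (mul_le_mul hMhigh hMhigh hMpos.le (Real.exp_pos _).le)
              (Real.exp_le_exp.2 (by linarith)) (Real.exp_pos _).le ?_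
            positivity
        _ = Real.exp ((EnR + 1) + (EnR + 1) - 40 * EnR) := by
            rw [← Real.exp_add, ← Real.exp_add]
            congr 1
            all_goals ring
        _ ≤ Real.exp (-2 : ℝ) := Real.exp_le_exp.2 (by nlinarith)
    calc (M:ℝ) * Real.exp (-((L:ℝ) * a₁)/2) + (M:ℝ) * (M:ℝ) * Real.exp (-((L:ℝ) * a₂)/2)
        ≤ Real.exp (-2:ℝ) + Real.exp (-2:ℝ) := add_le_add t1 t2
      _ < 1 := by linarith
  -- obtain the good codebook
  obtain ⟨ω, hgood1, hgood2⟩ := exists_good_codebook p (PnD_nonneg hP n) (PnD_sum hP n)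
    L M F₁ F₂ hF₁0 hF₁1 hF₂0 hF₂1 (Real.exp_pos _).le
    (by positivity : (0:ℝ) ≤ (L:ℝ) * Real.exp (-((n:ℝ) * γ)))
    hmean1 hmean2 hcond1 hcond2 hsmall
  -- build the ID code
  refine ⟨M, fun m x => (∑ j : Fin L, if ω m j = x then (1:ℝ) else 0) / (L:ℝ),
    fun m => poolD P W c n L (ω m), ⟨?_, ?_, ?_⟩, ?_⟩
  · -- each Q m is a PMF
    intro m
    constructor
    · intro x
      apply div_nonneg _ hLpos.le
      exact Finset.sum_nonneg fun j _ => by split <;> norm_num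
    · rw [← Finset.sum_div]
      rw [show ∑ x : Fin n → X, ∑ j : Fin L, (if ω m j = x then (1:ℝ) else 0)
          = ∑ j : Fin L, ∑ x : Fin n → X, (if ω m j = x then (1:ℝ) else 0) from
        Finset.sum_comm]
      have : ∀ j : Fin L, ∑ x : Fin n → X, (if ω m j = x then (1:ℝ) else 0) = 1 := by
        intro j
        rw [Finset.sum_ite_eq, if_pos (Finset.mem_univ _)]
      rw [Finset.sum_congr rfl (fun j _ => this j), Finset.sum_const, Finset.card_univ,
        Fintype.card_fin, nsmul_eq_mul, mul_one, div_self (ne_of_gt hLpos)]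
  · -- missed identification
    intro m
    have hswap : ∑ x, ((∑ j : Fin L, if ω m j = x then (1:ℝ) else 0) / (L:ℝ)) *
        ∑ y ∈ (poolD P W c n L (ω m))ᶜ, Wn W n x y
        = (∑ j, ∑ y ∈ (poolD P W c n L (ω m))ᶜ, Wn W n (ω m j) y) / (L:ℝ) := by
      calc ∑ x, ((∑ j : Fin L, if ω m j = x then (1:ℝ) else 0) / (L:ℝ)) *
          ∑ y ∈ (poolD P W c n L (ω m))ᶜ, Wn W n x y
          = (∑ x, (∑ j : Fin L, if ω m j = x then (1:ℝ) else 0) *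
              ∑ y ∈ (poolD P W c n L (ω m))ᶜ, Wn W n x y) / (L:ℝ) := by
            rw [Finset.sum_div]
            exact Finset.sum_congr rfl fun x _ => by ring
        _ = (∑ j, ∑ y ∈ (poolD P W c n L (ω m))ᶜ, Wn W n (ω m j) y) / (L:ℝ) := by
            rw [sum_empirical L (ω m)
              (fun v => ∑ y ∈ (poolD P W c n L (ω m))ᶜ, Wn W n v y)]
    rw [hswap]
    have hterm : ∀ j : Fin L, ∑ y ∈ (poolD P W c n L (ω m))ᶜ, Wn W n (ω m j) y
        ≤ F₁ (ω m j) := by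
      intro j
      rw [hF₁def]
      refine Finset.sum_le_sum_of_subset_of_nonneg ?_ (fun y _ _ => Wn_nonneg hW n _ y)
      intro y hy
      rw [Finset.mem_compl] at hy ⊢
      exact fun hc => hy (Tset_subset_poolD c n L (ω m) j hc)
    have hsum : ∑ j, ∑ y ∈ (poolD P W c n L (ω m))ᶜ, Wn W n (ω m j) y ≤ (L:ℝ) * a₁ :=
      le_trans (Finset.sum_le_sum fun j _ => hterm j) (hgood1 m)
    have hdiv : (∑ j, ∑ y ∈ (poolD P W c n L (ω m))ᶜ, Wn W n (ω m j) y) / (L:ℝ) ≤ a₁ := by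
      rw [div_le_iff₀ hLpos]
      linarith
    refine le_trans hdiv ?_
    -- a₁ = 4 exp(-nδ') ≤ exp(-(n δ'/2))
    rw [ha₁def]
    have h5 : (4:ℝ) ≤ Real.exp ((n:ℝ)*(δ'/2)) := by
      have h45 : (4:ℝ) ≤ (n:ℝ)*(δ'/2) := by nlinarith
      have := Real.add_one_le_exp ((n:ℝ)*(δ'/2))
      linarith
    have heq : Real.exp (-((n:ℝ)*δ')) * Real.exp ((n:ℝ)*(δ'/2))
        = Real.exp (-((n:ℝ)*(δ'/2))) := by
      rw [← Real.exp_add]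
      congr 1
      ring
    calc 4 * Real.exp (-((n:ℝ)*δ'))
        ≤ Real.exp (-((n:ℝ)*δ')) * Real.exp ((n:ℝ)*(δ'/2)) := by
          nlinarith [Real.exp_pos (-((n:ℝ)*δ'))]
      _ = Real.exp (-((n:ℝ)*(δ'/2))) := heq
  · -- wrong identification
    intro m m' hne
    have hswap : ∑ x, ((∑ j : Fin L, if ω m j = x then (1:ℝ) else 0) / (L:ℝ)) *
        ∑ y ∈ poolD P W c n L (ω m'), Wn W n x y
        = (∑ j, F₂ (ω m') (ω m j)) / (L:ℝ) := by
      calc ∑ x, ((∑ j : Fin L, if ω m j = x then (1:ℝ) else 0) / (L:ℝ)) *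
          ∑ y ∈ poolD P W c n L (ω m'), Wn W n x y
          = (∑ x, (∑ j : Fin L, if ω m j = x then (1:ℝ) else 0) *
              ∑ y ∈ poolD P W c n L (ω m'), Wn W n x y) / (L:ℝ) := by
            rw [Finset.sum_div]
            exact Finset.sum_congr rfl fun x _ => by ring
        _ = (∑ j, F₂ (ω m') (ω m j)) / (L:ℝ) := by
            rw [sum_empirical L (ω m)
              (fun v => ∑ y ∈ poolD P W c n L (ω m'), Wn W n v y)]
    rw [hswap]
    have hdiv : (∑ j, F₂ (ω m') (ω m j)) / (L:ℝ) ≤ a₂ := by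
      rw [div_le_iff₀ hLpos]
      have := hgood2 m m' hne
      linarith
    refine le_trans hdiv ?_
    rw [ha₂def]
    refine Real.exp_le_exp.2 ?_
    have : (n:ℝ) * (δ'/2) ≤ (n:ℝ) * d := by nlinarith
    linarith
  · -- the rate bound
    have hM1 : Real.exp EnR ≤ (M:ℝ) := hMlow
    have hlogM : EnR ≤ Real.log (M:ℝ) := by
      have := Real.log_le_log (Real.exp_pos _) hM1
      rwa [Real.log_exp] at this
    have hlogM0 : 0 < Real.log (M:ℝ) := lt_of_lt_of_le (by linarith) hlogM
    have hloglogM : (n:ℝ) * R ≤ Real.log (Real.log (M:ℝ)) := by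
      have h1 : Real.log EnR ≤ Real.log (Real.log (M:ℝ)) :=
        Real.log_le_log (lt_of_lt_of_le zero_lt_one hEnR1) hlogM
      rw [hEnRdef, Real.log_exp] at h1
      exact h1
    calc R = (1/(n:ℝ)) * ((n:ℝ) * R) := by field_simp
      _ ≤ (1/(n:ℝ)) * Real.log (Real.log (M:ℝ)) := by
          refine mul_le_mul_of_nonneg_left hloglogM ?_
          positivity
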